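/- If the basic level ℓ_b of G/Z divides ℓ, then the form ω(λ,μ) = (−1)^{ℓ⟨λ,μ⟩ + ℓ²⟨λ,λ⟩⟨μ,μ⟩} on the integral lattice Λ_Z of G/Z is a well-defined skew-symmetric bi-multiplicative 𝕋-valued form satisfying ω(α,μ) = (−1)^{ℓ⟨α,μ⟩} whenever α lies in the coroot lattice Q∨; in particular the fundamental level of G/Z divides its basic level. -/

import Mathlib

open scoped RealInnerProductSpace

/-- A level ℓ compatible commutator map on the lattice Λ (relative to the pairing B and
the coroot lattice Q): a bi-multiplicative, skew-symmetric map into the unit circle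
satisfying `ω(α,μ) = (-1)^(ℓ⟨α,μ⟩)` whenever α lies in Q. -/
def IsCommutatorForm {V : Type*} [AddCommGroup V] (B : V → V → ℝ) (Q Λ : Set V)
    (ℓ : ℕ) (ω : V → V → ℂ) : Prop :=
  (∀ a ∈ Λ, ∀ b ∈ Λ, ‖ω a b‖ = 1) ∧
  (∀ a ∈ Λ, ∀ b ∈ Λ, ∀ c ∈ Λ, ω (a + b) c = ω a c * ω b c) ∧
  (∀ a ∈ Λ, ∀ b ∈ Λ, ∀ c ∈ Λ, ω a (b + c) = ω a b * ω a c) ∧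
  (∀ a ∈ Λ, ∀ b ∈ Λ, ω a b * ω b a = 1) ∧
  (∀ a ∈ Λ, ω a a = 1) ∧
  (∀ α ∈ Q, α ∈ Λ → ∀ μ ∈ Λ, ∀ z : ℤ, B α μ = (z : ℝ) →
    ω α μ = (-1 : ℂ) ^ ((ℓ : ℤ) * z))

private lemma expPiI_int (z : ℤ) :
    Complex.exp (Real.pi * Complex.I * (z : ℂ)) = (-1 : ℂ) ^ z := by
  rw [mul_comm, Complex.exp_int_mul, Complex.exp_pi_mul_I]

private lemma exists_form
    {V : Type*} [NormedAddCommGroup V] [InnerProductSpace ℝ V]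
    (Qv Λ : Submodule ℤ V)
    (heven : ∀ a ∈ Qv, ∃ z : ℤ, ⟪a, a⟫ = 2 * (z : ℝ))
    (ℓ : ℕ)
    (hΛ : ∀ a ∈ Λ, ∀ b ∈ Λ, ∃ z : ℤ, (ℓ : ℝ) * ⟪a, b⟫ = (z : ℝ)) :
    ∃ ω : V → V → ℂ,
      (∀ a ∈ Λ, ∀ b ∈ Λ, ∀ z : ℤ,
        (ℓ : ℝ) * ⟪a, b⟫ + (ℓ : ℝ) ^ 2 * ⟪a, a⟫ * ⟪b, b⟫ = (z : ℝ) →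
        ω a b = (-1 : ℂ) ^ z) ∧
      IsCommutatorForm (fun a b => ⟪a, b⟫) (Qv : Set V) (Λ : Set V) ℓ ω := by
  classical
  set f : V → V → ℝ := fun a b => (ℓ : ℝ) * ⟪a, b⟫ + (ℓ : ℝ) ^ 2 * ⟪a, a⟫ * ⟪b, b⟫ with hf
  have hfe : ∀ a b : V, f a b = (ℓ : ℝ) * ⟪a, b⟫ + (ℓ : ℝ) ^ 2 * ⟪a, a⟫ * ⟪b, b⟫ :=
    fun a b => rfl
  refine ⟨fun a b => Complex.exp (Real.pi * Complex.I * (f a b : ℂ)), ?_, ?_, ?_, ?_, ?_, ?_, ?_⟩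
  · -- well-definedness
    intro a _ b _ z hz
    show Complex.exp (Real.pi * Complex.I * (f a b : ℂ)) = _
    rw [hfe, hz]; exact expPiI_int z
  · -- abs 1
    intro a _ b _
    show ‖Complex.exp (Real.pi * Complex.I * (f a b : ℂ))‖ = 1
    rw [Complex.norm_exp]; simp [Complex.mul_re]
  · -- left additivity
    intro a ha b hb c hc
    obtain ⟨zab, hab⟩ := hΛ a ha b hb
    obtain ⟨zcc, hcc⟩ := hΛ c hc c hc
    have key : f (a + b) c = f a c + f b c + ((2 * (zab * zcc) : ℤ) : ℝ) := by
      simp only [hfe, inner_add_left, inner_add_right, real_inner_add_add_self]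
      push_cast
      linear_combination (2 * (ℓ : ℝ) * ⟪c, c⟫) * hab + (2 * (zab : ℝ)) * hcc + ((ℓ:ℝ)^2 * ⟪c, c⟫) * (real_inner_comm a b)
    show Complex.exp (Real.pi * Complex.I * (f (a+b) c : ℂ)) =
      Complex.exp (Real.pi * Complex.I * (f a c : ℂ)) *
      Complex.exp (Real.pi * Complex.I * (f b c : ℂ))
    have keyC : ((f (a+b) c : ℝ) : ℂ) = (f a c : ℂ) + (f b c : ℂ) + ((2*(zab*zcc) : ℤ) : ℂ) := by
      rw [key]; push_cast; ring
    rw [keyC, mul_add, mul_add, Complex.exp_add, Complex.exp_add, expPiI_int,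
      (even_two_mul (zab*zcc)).neg_one_zpow, mul_one]
  · -- right additivity
    intro a ha b hb c hc
    obtain ⟨zbc, hbc⟩ := hΛ b hb c hc
    obtain ⟨zaa, haa⟩ := hΛ a ha a ha
    have key : f a (b + c) = f a b + f a c + ((2 * (zbc * zaa) : ℤ) : ℝ) := by
      simp only [hfe, inner_add_left, inner_add_right, real_inner_add_add_self]
      push_cast
      linear_combination (2 * (ℓ : ℝ) * ⟪a, a⟫) * hbc + (2 * (zbc : ℝ)) * haa + ((ℓ:ℝ)^2 * ⟪a, a⟫) * (real_inner_comm b c)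
    show Complex.exp (Real.pi * Complex.I * (f a (b+c) : ℂ)) =
      Complex.exp (Real.pi * Complex.I * (f a b : ℂ)) *
      Complex.exp (Real.pi * Complex.I * (f a c : ℂ))
    have keyC : ((f a (b+c) : ℝ) : ℂ) = (f a b : ℂ) + (f a c : ℂ) + ((2*(zbc*zaa) : ℤ) : ℂ) := by
      rw [key]; push_cast; ring
    rw [keyC, mul_add, mul_add, Complex.exp_add, Complex.exp_add, expPiI_int,
      (even_two_mul (zbc*zaa)).neg_one_zpow, mul_one]
  · -- skew
    intro a ha b hb
    obtain ⟨zab, hab⟩ := hΛ a ha b hb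
    obtain ⟨zaa, haa⟩ := hΛ a ha a ha
    obtain ⟨zbb, hbb⟩ := hΛ b hb b hb
    have key : f a b + f b a = ((2 * (zab + zaa * zbb) : ℤ) : ℝ) := by
      simp only [hfe]
      push_cast
      linear_combination 2 * hab + (2 * (ℓ:ℝ) * ⟪b,b⟫) * haa + (2 * (zaa : ℝ)) * hbb + ((ℓ:ℝ)) * (real_inner_comm a b)
    show Complex.exp (Real.pi * Complex.I * (f a b : ℂ)) *
      Complex.exp (Real.pi * Complex.I * (f b a : ℂ)) = 1
    have keyC : ((f a b : ℝ) : ℂ) + (f b a : ℂ) = ((2*(zab + zaa*zbb) : ℤ) : ℂ) := by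
      rw [← Complex.ofReal_add, key]; norm_cast
    rw [← Complex.exp_add, ← mul_add, keyC, expPiI_int, (even_two_mul _).neg_one_zpow]
  · -- diagonal
    intro a ha
    obtain ⟨zaa, haa⟩ := hΛ a ha a ha
    have key : f a a = ((zaa + zaa * zaa : ℤ) : ℝ) := by
      simp only [hfe]
      push_cast
      linear_combination haa + ((ℓ:ℝ) * ⟪a,a⟫ + (zaa:ℝ)) * haa
    have hev : Even (zaa + zaa * zaa) := by
      rcases Int.even_mul_succ_self zaa with ⟨k, hk⟩
      exact ⟨k, by linarith [hk]⟩
    show Complex.exp (Real.pi * Complex.I * (f a a : ℂ)) = 1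
    rw [show ((f a a : ℝ) : ℂ) = ((zaa + zaa*zaa : ℤ) : ℂ) by rw [key]; norm_cast,
      expPiI_int, hev.neg_one_zpow]
  · -- coroot
    intro α hα hαΛ μ hμ z hz
    have hz' : ⟪α, μ⟫ = (z : ℝ) := hz
    obtain ⟨w, hw⟩ := heven α hα
    obtain ⟨m, hm⟩ := hΛ μ hμ μ hμ
    have key : f α μ = (((ℓ : ℤ) * z + 2 * ((ℓ : ℤ) * w * m) : ℤ) : ℝ) := by
      rw [hfe, hz', hw]
      push_cast
      linear_combination (2 * (ℓ:ℝ) * (w:ℝ)) * hm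
    show Complex.exp (Real.pi * Complex.I * (f α μ : ℂ)) = (-1 : ℂ) ^ ((ℓ : ℤ) * z)
    rw [show ((f α μ : ℝ) : ℂ) = (((ℓ:ℤ) * z + 2 * ((ℓ:ℤ) * w * m) : ℤ) : ℂ) by
        rw [key]; norm_cast,
      expPiI_int, zpow_add₀ (by norm_num : (-1:ℂ) ≠ 0),
      (even_two_mul _).neg_one_zpow, mul_one]

private lemma comm_form_congr {V : Type*} [AddCommGroup V] (B : V → V → ℝ) (Q Λ : Set V)
    (m n : ℕ) (hp : (m : ℤ) % 2 = (n : ℤ) % 2) (ω : V → V → ℂ)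
    (h : IsCommutatorForm B Q Λ m ω) : IsCommutatorForm B Q Λ n ω := by
  obtain ⟨h1, h2, h3, h4, h5, h6⟩ := h
  refine ⟨h1, h2, h3, h4, h5, fun α hα hαΛ μ hμ z hz => ?_⟩
  rw [h6 α hα hαΛ μ hμ z hz]
  have hev : Even (((n : ℤ) - m) * z) := by
    refine Even.mul_right ?_ z
    rw [Int.even_sub, Int.even_iff, Int.even_iff]
    omega
  have e : ((m : ℤ) * z) = (n : ℤ) * z + ((n : ℤ) - m) * z * (-1) := by ring
  rw [e, zpow_add₀ (by norm_num : (-1:ℂ) ≠ 0)]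
  rw [show ((n:ℤ) - m) * z * (-1) = -(((n:ℤ)-m)*z) by ring]
  rw [zpow_neg, hev.neg_one_zpow, inv_one, mul_one]


/-- If the basic level `ℓ_b` of `G/Z` divides ℓ, then the form
`ω(λ,μ) = (-1)^(ℓ⟨λ,μ⟩ + ℓ²⟨λ,λ⟩⟨μ,μ⟩)` on the integral lattice `Λ_Z` of `G/Z` is a
well-defined skew-symmetric bi-multiplicative 𝕋-valued form satisfying
`ω(α,μ) = (-1)^(ℓ⟨α,μ⟩)` whenever α lies in the coroot lattice `Q∨`; in particular the
fundamental level of `G/Z` divides its basic level. -/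
theorem canonical_form_at_multiples_of_basic_level
    {V : Type*} [NormedAddCommGroup V] [InnerProductSpace ℝ V]
    (Qv Λ : Submodule ℤ V) (hQΛ : Qv ≤ Λ)
    (hpair : ∀ a ∈ Qv, ∀ b ∈ Λ, ∃ z : ℤ, ⟪a, b⟫ = (z : ℝ))
    (heven : ∀ a ∈ Qv, ∃ z : ℤ, ⟪a, a⟫ = 2 * (z : ℝ))
    (ℓb : ℕ)
    (hb : IsLeast {ℓ : ℕ | 1 ≤ ℓ ∧ ∀ a ∈ Λ, ∀ b ∈ Λ,
      ∃ z : ℤ, (ℓ : ℝ) * ⟪a, b⟫ = (z : ℝ)} ℓb)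
    (ℓ : ℕ) (hdvd : ℓb ∣ ℓ) :
    (∃ ω : V → V → ℂ,
      (∀ a ∈ Λ, ∀ b ∈ Λ, ∀ z : ℤ,
        (ℓ : ℝ) * ⟪a, b⟫ + (ℓ : ℝ) ^ 2 * ⟪a, a⟫ * ⟪b, b⟫ = (z : ℝ) →
        ω a b = (-1 : ℂ) ^ z) ∧
      IsCommutatorForm (fun a b => ⟪a, b⟫) (Qv : Set V) (Λ : Set V) ℓ ω) ∧
    (∀ ℓf : ℕ,
      IsLeast {ℓ' : ℕ | 1 ≤ ℓ' ∧ ∃ ω : V → V → ℂ,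
        IsCommutatorForm (fun a b => ⟪a, b⟫) (Qv : Set V) (Λ : Set V) ℓ' ω} ℓf →
      ℓf ∣ ℓb) := by
  obtain ⟨⟨hℓb1, hℓbint⟩, hleast⟩ := hb
  obtain ⟨k, hk⟩ := hdvd
  have hΛℓ : ∀ a ∈ Λ, ∀ b ∈ Λ, ∃ z : ℤ, (ℓ : ℝ) * ⟪a, b⟫ = (z : ℝ) := by
    intro a ha b hb
    obtain ⟨z, hz⟩ := hℓbint a ha b hb
    refine ⟨k * z, ?_⟩
    rw [hk]; push_cast
    linear_combination (k : ℝ) * hz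
  refine ⟨exists_form Qv Λ heven ℓ hΛℓ, ?_⟩
  intro ℓf hf
  obtain ⟨ωb, -, hωb⟩ := exists_form Qv Λ heven ℓb hℓbint
  rcases Nat.even_or_odd ℓb with he | ho
  · -- even case: 2 is in the set, so ℓf ≤ 2, and 1, 2 both divide ℓb
    obtain ⟨t, ht⟩ := he
    have h2 : ℓf ≤ 2 := hf.2 ⟨by norm_num,
      ωb, comm_form_congr _ _ _ ℓb 2 (by omega) ωb hωb⟩
    have h1 : 1 ≤ ℓf := hf.1.1
    interval_cases ℓf
    · exact one_dvd _
    · exact ⟨t, by omega⟩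
  · -- odd case: 1 is in the set, so ℓf = 1
    obtain ⟨t, ht⟩ := ho
    have h1 : ℓf ≤ 1 := hf.2 ⟨le_refl 1,
      ωb, comm_form_congr _ _ _ ℓb 1 (by omega) ωb hωb⟩
    have : ℓf = 1 := le_antisymm h1 hf.1.1
    simp [this]
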